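/- Let m0 ≥ 2, m1 ≥ m0, and let r solve the (m0,m1)-ODE with lim_{x→-∞} r(x) = kπ for some integer k and lim_{x→-∞} r'(x) = 0. Then |r'(x)| ≤ √m0 for all x ≤ Z_α, where Z_α is the unique zero of α. -/

import Mathlib

open Filter

noncomputable def artanh (x : ℝ) : ℝ := (1/2) * Real.log ((1 + x) / (1 - x))

lemma tanh_exp (x : ℝ) : Real.tanh x =
    (Real.exp (2*x) - 1) / (Real.exp (2*x) + 1) := by
  have h2 : Real.exp (2*x) = Real.exp x * Real.exp x := by
    rw [← Real.exp_add]; ring_nf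
  have hp := Real.exp_pos x
  have hnx : Real.exp (-x) = 1 / Real.exp x := by
    rw [Real.exp_neg]; exact inv_eq_one_div _
  rw [Real.tanh_eq_sinh_div_cosh, Real.sinh_eq, Real.cosh_eq, h2, hnx]
  have hden : Real.exp x * Real.exp x + 1 > 0 := by positivity
  field_simp

lemma my_hasDerivAt_tanh (x : ℝ) : HasDerivAt Real.tanh (1 - Real.tanh x ^ 2) x := by
  have h := (Real.hasDerivAt_sinh x).div (Real.hasDerivAt_cosh x)
    (ne_of_gt (Real.cosh_pos x))
  have hfun : (fun y => Real.sinh y / Real.cosh y) = Real.tanh := by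
    funext y; rw [Real.tanh_eq_sinh_div_cosh]
  rw [show (Real.sinh / Real.cosh) = Real.tanh from hfun] at h
  refine h.congr_deriv ?_
  have hc := Real.cosh_pos x
  have hcs := Real.cosh_sq x
  rw [Real.tanh_eq_sinh_div_cosh]
  field_simp

lemma tanh_sq_lt_one (x : ℝ) : Real.tanh x ^ 2 < 1 := by
  rw [Real.tanh_eq_sinh_div_cosh, div_pow, div_lt_one (by positivity)]
  nlinarith [Real.cosh_sq x]

lemma tanh_monotone : Monotone Real.tanh := by
  apply monotone_of_deriv_nonneg
  · exact fun x => (my_hasDerivAt_tanh x).differentiableAt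
  · intro x
    rw [(my_hasDerivAt_tanh x).deriv]
    nlinarith [tanh_sq_lt_one x]

lemma tanh_artanh {t : ℝ} (h1 : -1 < t) (h2 : t < 1) : Real.tanh (artanh t) = t := by
  have h1' : (0:ℝ) < 1 + t := by linarith
  have h2' : (0:ℝ) < 1 - t := by linarith
  have hexp : Real.exp (2 * artanh t) = (1 + t) / (1 - t) := by
    unfold artanh
    rw [show 2 * (1/2 * Real.log ((1 + t) / (1 - t))) = Real.log ((1 + t) / (1 - t)) by ring]
    exact Real.exp_log (by positivity)
  rw [tanh_exp, hexp]
  have hne : (1 + t) / (1 - t) + 1 ≠ 0 := by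
    have : (1 + t) / (1 - t) + 1 = 2 / (1 - t) := by field_simp; ring
    rw [this]; positivity
  field_simp
  ring

lemma tendsto_tanh_atBot : Tendsto Real.tanh atBot (nhds (-1)) := by
  have hfun : Real.tanh = fun x => (Real.exp (2*x) - 1) / (Real.exp (2*x) + 1) := by
    funext x; exact tanh_exp x
  rw [hfun]
  have hexp : Tendsto (fun x : ℝ => Real.exp (2*x)) atBot (nhds 0) := by
    apply Real.tendsto_exp_atBot.comp
    exact (tendsto_const_mul_atBot_of_pos (by norm_num : (0:ℝ) < 2)).2 tendsto_id
  have := (hexp.sub_const 1).div (hexp.add_const 1) (by norm_num)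
  exact (by simpa using this : Tendsto ((fun x : ℝ => Real.exp (2*x) - 1) / (fun x : ℝ => Real.exp (2*x) + 1)) atBot (nhds (-1)))

/-- If r solves the (m0,m1)-ODE with r(x) → kπ and r'(x) → 0 as x → -∞,
then |r'(x)| ≤ √m0 for all x ≤ Z_α. -/
theorem deriv_bound_left_of_Zalpha (m0 m1 : ℕ) (hm0 : 2 ≤ m0) (hm1 : m0 ≤ m1)
    (α β : ℝ → ℝ)
    (hα : ∀ x, α x = (1/2) * (((m0:ℝ) + m1 - 2) * Real.tanh x + m1 - m0))
    (hβ : ∀ x, β x = (1/4) * (((m0:ℝ) + m1) * Real.tanh x + m1 - m0))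
    (r r' : ℝ → ℝ)
    (hr : ∀ x, HasDerivAt r (r' x) x)
    (hr' : ∀ x, HasDerivAt r' (α x * r' x - β x * Real.sin (2 * r x)) x)
    (k : ℤ)
    (hlim : Tendsto r atBot (nhds ((k:ℝ) * Real.pi)))
    (hlim' : Tendsto r' atBot (nhds 0)) :
    ∀ x : ℝ, x ≤ artanh (((m0:ℝ) - m1) / ((m0:ℝ) + m1 - 2)) →
      |r' x| ≤ Real.sqrt m0 := by
  intro x hx
  have hm0R : (2:ℝ) ≤ (m0:ℝ) := by exact_mod_cast hm0
  have hm1R : (m0:ℝ) ≤ (m1:ℝ) := by exact_mod_cast hm1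
  set Zα := artanh (((m0:ℝ) - m1) / ((m0:ℝ) + m1 - 2)) with hZdef
  set t : ℝ := ((m0:ℝ) - m1) / ((m0:ℝ) + m1 - 2) with htdef
  have hden : (0:ℝ) < (m0:ℝ) + m1 - 2 := by linarith
  have ht1 : -1 < t := by
    rw [htdef, lt_div_iff₀ hden]; linarith
  have ht0 : t ≤ 0 := div_nonpos_of_nonpos_of_nonneg (by linarith) (le_of_lt hden)
  have ht2 : t < 1 := lt_of_le_of_lt ht0 one_pos
  have htanhZ : Real.tanh Zα = t := tanh_artanh ht1 ht2
  -- the Lyapunov function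
  set V : ℝ → ℝ := fun y => (1/2) * (r' y)^2 - β y * (Real.cos (r y))^2 with hVdef
  -- derivative of β
  have hβfun : β = fun y => (1/4) * (((m0:ℝ) + m1) * Real.tanh y + ((m1:ℝ) - m0)) := by
    funext y; rw [hβ y]; ring
  have hβd : ∀ y, HasDerivAt β ((1/4) * (((m0:ℝ) + m1) * (1 - Real.tanh y ^ 2))) y := by
    intro y
    rw [hβfun]
    have h1 := ((my_hasDerivAt_tanh y).const_mul (((m0:ℝ) + m1))).add_const ((m1:ℝ) - m0)
    have h2 := h1.const_mul ((1:ℝ)/4)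
    convert h2 using 1
  -- derivative of V
  have hVd : ∀ y, HasDerivAt V (α y * (r' y)^2
      - (1/4) * (((m0:ℝ) + m1) * (1 - Real.tanh y ^ 2)) * (Real.cos (r y))^2) y := by
    intro y
    have hA : HasDerivAt (fun z => (1/2) * (r' z)^2)
        ((1/2) * (2 * r' y * (α y * r' y - β y * Real.sin (2 * r y)))) y := by
      have := ((hr' y).pow 2).const_mul ((1:ℝ)/2)
      refine this.congr_deriv ?_
      push_cast
      ring
    have hcos : HasDerivAt (fun z => Real.cos (r z)) (-Real.sin (r y) * r' y) y :=
      (Real.hasDerivAt_cos (r y)).comp y (hr y)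
    have hcos2 : HasDerivAt (fun z => (Real.cos (r z))^2)
        (2 * Real.cos (r y) * (-Real.sin (r y) * r' y)) y := by
      have := hcos.pow 2
      refine this.congr_deriv ?_
      push_cast
      ring
    have hB := (hβd y).mul hcos2
    have h := hA.sub hB
    refine h.congr_deriv ?_
    rw [Real.sin_two_mul]
    ring
  -- V is antitone on Iic Zα
  have hVanti : AntitoneOn V (Set.Iic Zα) := by
    apply antitoneOn_of_deriv_nonpos (convex_Iic Zα)
    · exact fun y _ => ((hVd y).differentiableAt).continuousAt.continuousWithinAt
    · exact fun y _ => ((hVd y).differentiableAt).differentiableWithinAt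
    · intro y hy
      rw [(hVd y).deriv]
      have hαy : α y ≤ 0 := by
        rw [hα y]
        have htanh : Real.tanh y ≤ t := by
          rw [← htanhZ]
          exact tanh_monotone (le_of_lt (by simpa using hy))
        have : ((m0:ℝ) + m1 - 2) * Real.tanh y ≤ ((m0:ℝ) + m1 - 2) * t :=
          mul_le_mul_of_nonneg_left htanh (le_of_lt hden)
        have ht' : ((m0:ℝ) + m1 - 2) * t = (m0:ℝ) - m1 := by
          rw [htdef]; field_simp
        nlinarith
      have h1 : α y * (r' y)^2 ≤ 0 := mul_nonpos_of_nonpos_of_nonneg hαy (sq_nonneg _)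
      have h2 : 0 ≤ (1/4) * (((m0:ℝ) + m1) * (1 - Real.tanh y ^ 2)) * (Real.cos (r y))^2 := by
        have ht' : (0:ℝ) ≤ 1 - Real.tanh y ^ 2 := by nlinarith [tanh_sq_lt_one y]
        have hmm : (0:ℝ) ≤ (m0:ℝ) + m1 := by positivity
        exact mul_nonneg (mul_nonneg (by norm_num) (mul_nonneg hmm ht')) (sq_nonneg _)
      linarith
  -- limit of V at -∞
  have hVlim : Tendsto V atBot (nhds ((m0:ℝ)/2)) := by
    have hβlim : Tendsto β atBot (nhds (-(m0:ℝ)/2)) := by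
      rw [hβfun]
      have h1 := ((tendsto_tanh_atBot.const_mul (((m0:ℝ) + m1))).add_const
        ((m1:ℝ) - m0)).const_mul ((1:ℝ)/4)
      convert h1 using 2
      ring
    have hcoslim : Tendsto (fun y => (Real.cos (r y))^2) atBot (nhds 1) := by
      have h1 : Tendsto (fun y => Real.cos (r y)) atBot (nhds (Real.cos ((k:ℝ) * Real.pi))) :=
        (Real.continuous_cos.continuousAt).tendsto.comp hlim
      have h2 := h1.pow 2
      have hcosval : (Real.cos ((k:ℝ) * Real.pi))^2 = 1 := by
        have hs := Real.sin_int_mul_pi k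
        nlinarith [Real.sin_sq_add_cos_sq ((k:ℝ) * Real.pi)]
      rwa [hcosval] at h2
    have h1 : Tendsto (fun y => (1/2) * (r' y)^2) atBot (nhds ((1/2) * 0^2)) :=
      (hlim'.pow 2).const_mul _
    have h := h1.sub (hβlim.mul hcoslim)
    convert h using 2
    ring
  -- V x ≤ m0/2
  have hVle : V x ≤ (m0:ℝ)/2 := by
    apply ge_of_tendsto hVlim
    filter_upwards [eventually_le_atBot x] with y hy
    exact hVanti (Set.mem_Iic.2 (le_trans hy hx)) (Set.mem_Iic.2 hx) hy
  -- β x ≤ 0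
  have hβx : β x ≤ 0 := by
    rw [hβ x]
    have htanh : Real.tanh x ≤ t := by
      rw [← htanhZ]; exact tanh_monotone hx
    have h1 : ((m0:ℝ) + m1) * Real.tanh x ≤ ((m0:ℝ) + m1) * t :=
      mul_le_mul_of_nonneg_left htanh (by linarith)
    have h2 : ((m0:ℝ) + m1) * t ≤ ((m0:ℝ) + m1 - 2) * t := by nlinarith
    have ht' : ((m0:ℝ) + m1 - 2) * t = (m0:ℝ) - m1 := by
      rw [htdef]; field_simp
    nlinarith
  -- conclude
  have hsq : (r' x)^2 ≤ (m0:ℝ) := by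
    have hc : (0:ℝ) ≤ (Real.cos (r x))^2 := sq_nonneg _
    have : (1/2) * (r' x)^2 - β x * (Real.cos (r x))^2 ≤ (m0:ℝ)/2 := hVle
    nlinarith
  rw [← Real.sqrt_sq_eq_abs]
  exact Real.sqrt_le_sqrt hsq
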